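/- If P is a simple Kantor pair over 𝕂, then the centroid C(P) is a field, and P, viewed as a pair of C(P)-modules via the centroid action with the same trilinear products, is a central simple Kantor pair over the field C(P). -/
import Mathlib


/-- A Kantor pair over `K`: a pair of modules `(Pm, Pp)` (for `P⁻`, `P⁺`) with trilinear
products `tm : P⁻ × P⁺ × P⁻ → P⁻` and `tp : P⁺ × P⁻ × P⁺ → P⁺` satisfying the Kantor
identities (K1) and (K2). -/
structure KantorPair (K : Type*) [CommRing K] (Pm Pp : Type*)
    [AddCommGroup Pm] [AddCommGroup Pp] [Module K Pm] [Module K Pp] where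
  tm : Pm → Pp → Pm → Pm
  tp : Pp → Pm → Pp → Pp
  tm_add₁ : ∀ x x' y z, tm (x + x') y z = tm x y z + tm x' y z
  tm_smul₁ : ∀ (a : K) x y z, tm (a • x) y z = a • tm x y z
  tm_add₂ : ∀ x y y' z, tm x (y + y') z = tm x y z + tm x y' z
  tm_smul₂ : ∀ (a : K) x y z, tm x (a • y) z = a • tm x y z
  tm_add₃ : ∀ x y z z', tm x y (z + z') = tm x y z + tm x y z'
  tm_smul₃ : ∀ (a : K) x y z, tm x y (a • z) = a • tm x y z
  tp_add₁ : ∀ x x' y z, tp (x + x') y z = tp x y z + tp x' y z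
  tp_smul₁ : ∀ (a : K) x y z, tp (a • x) y z = a • tp x y z
  tp_add₂ : ∀ x y y' z, tp x (y + y') z = tp x y z + tp x y' z
  tp_smul₂ : ∀ (a : K) x y z, tp x (a • y) z = a • tp x y z
  tp_add₃ : ∀ x y z z', tp x y (z + z') = tp x y z + tp x y z'
  tp_smul₃ : ∀ (a : K) x y z, tp x y (a • z) = a • tp x y z
  k1m : ∀ (x z u : Pm) (y w : Pp),
    tm x y (tm z w u) - tm z w (tm x y u) = tm (tm x y z) w u - tm z (tp y x w) u
  k1p : ∀ (x z u : Pp) (y w : Pm),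
    tp x y (tp z w u) - tp z w (tp x y u) = tp (tp x y z) w u - tp z (tm y x w) u
  k2m : ∀ (x z u : Pm) (w v : Pp),
    (tm x (tp w u v) z - tm z (tp w u v) x) + tm u w (tm x v z - tm z v x)
      = tm (tm x w z - tm z w x) v u - tm u v (tm x w z - tm z w x)
  k2p : ∀ (x z u : Pp) (w v : Pm),
    (tp x (tm w u v) z - tp z (tm w u v) x) + tp u w (tp x v z - tp z v x)
      = tp (tp x w z - tp z w x) v u - tp u v (tp x w z - tp z w x)

namespace KantorPair

variable {K : Type*} [CommRing K] {Pm Pp : Type*}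
  [AddCommGroup Pm] [AddCommGroup Pp] [Module K Pm] [Module K Pp]

/-- `Q = (Qm, Qp)` is an ideal of the Kantor pair:
`{P,P,Q} + {P,Q,P} + {Q,P,P} ⊆ Q` on each side. -/
def IsIdealPair (KP : KantorPair K Pm Pp) (Qm : Submodule K Pm) (Qp : Submodule K Pp) : Prop :=
  (∀ (x z : Pm) (y : Pp) (q : Pm), q ∈ Qm → KP.tm x y q ∈ Qm ∧ KP.tm q y z ∈ Qm) ∧
  (∀ (x z : Pm) (r : Pp), r ∈ Qp → KP.tm x r z ∈ Qm) ∧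
  (∀ (x z : Pp) (y : Pm) (q : Pp), q ∈ Qp → KP.tp x y q ∈ Qp ∧ KP.tp q y z ∈ Qp) ∧
  (∀ (x z : Pp) (r : Pm), r ∈ Qm → KP.tp x r z ∈ Qp)

/-- A Kantor pair is simple if some product is nonzero and its only ideals are `0` and `P`. -/
def IsSimplePair (KP : KantorPair K Pm Pp) : Prop :=
  ((∃ x y z, KP.tm x y z ≠ 0) ∨ (∃ x y z, KP.tp x y z ≠ 0)) ∧
  ∀ Qm Qp, KP.IsIdealPair Qm Qp → (Qm = ⊥ ∧ Qp = ⊥) ∨ (Qm = ⊤ ∧ Qp = ⊤)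

/-- `(ωm, ωp)` belongs to the centroid of the Kantor pair. -/
def InCentroid (KP : KantorPair K Pm Pp) (ωm : Pm →ₗ[K] Pm) (ωp : Pp →ₗ[K] Pp) : Prop :=
  (∀ x y z, ωm (KP.tm x y z) = KP.tm (ωm x) y z ∧
      ωm (KP.tm x y z) = KP.tm x (ωp y) z ∧ ωm (KP.tm x y z) = KP.tm x y (ωm z)) ∧
  (∀ x y z, ωp (KP.tp x y z) = KP.tp (ωp x) y z ∧
      ωp (KP.tp x y z) = KP.tp x (ωm y) z ∧ ωp (KP.tp x y z) = KP.tp x y (ωp z))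

/-- The Kantor pair is central: `a ↦ (a • id, a • id)` is an isomorphism of `K`
onto the centroid. -/
def IsCentralPair (KP : KantorPair K Pm Pp) : Prop :=
  (∀ ωm ωp, KP.InCentroid ωm ωp →
    ∃ a : K, ωm = a • (LinearMap.id : Pm →ₗ[K] Pm) ∧ ωp = a • (LinearMap.id : Pp →ₗ[K] Pp)) ∧
  ∀ a : K, a • (LinearMap.id : Pm →ₗ[K] Pm) = 0 →
    a • (LinearMap.id : Pp →ₗ[K] Pp) = 0 → a = 0

/-- A Jordan pair is a Kantor pair with vanishing K-operators, i.e. symmetric products. -/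
def IsJordanPair (KP : KantorPair K Pm Pp) : Prop :=
  (∀ (x z : Pm) (y : Pp), KP.tm x y z = KP.tm z y x) ∧
  (∀ (x z : Pp) (y : Pm), KP.tp x y z = KP.tp z y x)

end KantorPair

/-- A 5-grading (= BC₁-grading) of a Lie algebra `L` over `K`:
an internal direct sum decomposition `L = ⊕_{i ∈ ℤ} L_i` with `⁅L_i, L_j⁆ ⊆ L_{i+j}`
and `L_i = 0` for `|i| > 2`. -/
structure FiveGrading (K : Type*) [CommRing K] (L : Type*) [LieRing L] [LieAlgebra K L] where
  g : ℤ → Submodule K L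
  internal : DirectSum.IsInternal g
  lie_mem : ∀ (i j : ℤ) (x y : L), x ∈ g i → y ∈ g j → ⁅x, y⁆ ∈ g (i + j)
  vanish : ∀ i : ℤ, 2 < |i| → g i = ⊥

/-- `T_L(P) = L_{-1} ⊕ L_1` as a submodule of `L`. -/
def Tsub {K : Type*} [CommRing K] {L : Type*} [LieRing L] [LieAlgebra K L]
    (fg : FiveGrading K L) : Submodule K L :=
  fg.g (-1) ⊔ fg.g 1

/-- The span of all brackets `⁅x, y⁆` with `x ∈ U`, `y ∈ V`. -/
def brkSpan (K : Type*) [CommRing K] {L : Type*} [LieRing L] [LieAlgebra K L]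
    (U V : Submodule K L) : Submodule K L :=
  Submodule.span K {w : L | ∃ x ∈ U, ∃ y ∈ V, w = ⁅x, y⁆}

/-- A 5-graded Lie algebra `L` tightly envelops the Kantor pair `(L_{-1}, L_1)` if it
is generated as a Lie algebra by `T = L_{-1} ⊕ L_1` and `Z(L) ∩ [T, T] = 0`. -/
def Tight (K : Type*) [CommRing K] {L : Type*} [LieRing L] [LieAlgebra K L]
    (fg : FiveGrading K L) : Prop :=
  LieSubalgebra.lieSpan K L ↑(Tsub fg) = ⊤ ∧
  ∀ z ∈ brkSpan K (Tsub fg) (Tsub fg), (∀ u : L, ⁅z, u⁆ = 0) → z = 0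

/-- A 5-graded Lie algebra `(L, fg)` envelops a Kantor pair `KP`: there are identifications
of `P⁻` with `L_{-1}` and `P⁺` with `L_1` under which the products of `KP` are the products
`⁅⁅x, y⁆, z⁆` of `L`. -/
structure Envelops {K : Type*} [CommRing K] {Pm Pp : Type*}
    [AddCommGroup Pm] [AddCommGroup Pp] [Module K Pm] [Module K Pp]
    (KP : KantorPair K Pm Pp)
    {L : Type*} [LieRing L] [LieAlgebra K L] (fg : FiveGrading K L) where
  em : Pm →ₗ[K] L
  ep : Pp →ₗ[K] L
  inj_m : Function.Injective em
  inj_p : Function.Injective ep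
  range_m : LinearMap.range em = fg.g (-1)
  range_p : LinearMap.range ep = fg.g 1
  compat_m : ∀ (x z : Pm) (y : Pp), em (KP.tm x y z) = ⁅⁅em x, ep y⁆, em z⁆
  compat_p : ∀ (x z : Pp) (y : Pm), ep (KP.tp x y z) = ⁅⁅ep x, em y⁆, ep z⁆

/-- A short Peirce grading (SP-grading) of a Kantor pair: a `ℤ`-grading with support
contained in `{0, 1}`. -/
structure SPGrading {K : Type*} [CommRing K] {Pm Pp : Type*}
    [AddCommGroup Pm] [AddCommGroup Pp] [Module K Pm] [Module K Pp]
    (KP : KantorPair K Pm Pp) where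
  Qm : ℤ → Submodule K Pm
  Qp : ℤ → Submodule K Pp
  sup_m : Qm 0 ⊔ Qm 1 = ⊤
  disj_m : Disjoint (Qm 0) (Qm 1)
  sup_p : Qp 0 ⊔ Qp 1 = ⊤
  disj_p : Disjoint (Qp 0) (Qp 1)
  vanish_m : ∀ i : ℤ, i ≠ 0 → i ≠ 1 → Qm i = ⊥
  vanish_p : ∀ i : ℤ, i ≠ 0 → i ≠ 1 → Qp i = ⊥
  grade_m : ∀ (i j k : ℤ) (x : Pm) (y : Pp) (z : Pm),
    x ∈ Qm i → y ∈ Qp j → z ∈ Qm k → KP.tm x y z ∈ Qm (i - j + k)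
  grade_p : ∀ (i j k : ℤ) (x : Pp) (y : Pm) (z : Pp),
    x ∈ Qp i → y ∈ Qm j → z ∈ Qp k → KP.tp x y z ∈ Qp (i - j + k)

/-- `KPc` is the reflection `P̌` of the SP-graded Kantor pair `(KP, SP)`:
`P̌^σ = P₀^{-σ} ⊕ P₁^σ`, with products given by the reflection formula. -/
def IsReflection {K : Type*} [CommRing K] {Pm Pp : Type*}
    [AddCommGroup Pm] [AddCommGroup Pp] [Module K Pm] [Module K Pp]
    (KP : KantorPair K Pm Pp) (SP : SPGrading KP)
    (KPc : KantorPair K ((SP.Qp 0) × (SP.Qm 1)) ((SP.Qm 0) × (SP.Qp 1))) : Prop :=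
  (∀ (a c : (SP.Qm 0) × (SP.Qp 1)) (b : (SP.Qp 0) × (SP.Qm 1)),
    ((KPc.tp a b c).1 : Pm)
      = KP.tm a.1 b.1 c.1 - KP.tm b.2 a.2 c.1 + (KP.tm a.1 c.2 b.2 - KP.tm b.2 c.2 a.1) ∧
    ((KPc.tp a b c).2 : Pp)
      = KP.tp a.2 b.2 c.2 - KP.tp b.1 a.1 c.2 + (KP.tp a.2 c.1 b.1 - KP.tp b.1 c.1 a.2)) ∧
  (∀ (a c : (SP.Qp 0) × (SP.Qm 1)) (b : (SP.Qm 0) × (SP.Qp 1)),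
    ((KPc.tm a b c).1 : Pp)
      = KP.tp a.1 b.1 c.1 - KP.tp b.2 a.2 c.1 + (KP.tp a.1 c.2 b.2 - KP.tp b.2 c.2 a.1) ∧
    ((KPc.tm a b c).2 : Pm)
      = KP.tm a.2 b.2 c.2 - KP.tm b.1 a.1 c.2 + (KP.tm a.2 c.1 b.1 - KP.tm b.1 c.1 a.2))

section Aux
variable {K : Type*} [CommRing K] {Pm Pp : Type*}
  [AddCommGroup Pm] [AddCommGroup Pp] [Module K Pm] [Module K Pp]

/-- The pair of spans of all products is an ideal; under simplicity it is everything. -/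
lemma span_products_eq_top (KP : KantorPair K Pm Pp) (hsimple : KP.IsSimplePair) :
    Submodule.span K {w : Pm | ∃ x y z, KP.tm x y z = w} = ⊤ ∧
    Submodule.span K {w : Pp | ∃ x y z, KP.tp x y z = w} = ⊤ := by
  set Qm := Submodule.span K {w : Pm | ∃ x y z, KP.tm x y z = w} with hQm
  set Qp := Submodule.span K {w : Pp | ∃ x y z, KP.tp x y z = w} with hQp
  have hgm : ∀ x y z, KP.tm x y z ∈ Qm := fun x y z =>
    Submodule.subset_span ⟨x, y, z, rfl⟩
  have hgp : ∀ x y z, KP.tp x y z ∈ Qp := fun x y z =>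
    Submodule.subset_span ⟨x, y, z, rfl⟩
  have hideal : KP.IsIdealPair Qm Qp :=
    ⟨fun x z y q _ => ⟨hgm _ _ _, hgm _ _ _⟩, fun x z r _ => hgm _ _ _,
     fun x z y q _ => ⟨hgp _ _ _, hgp _ _ _⟩, fun x z r _ => hgp _ _ _⟩
  rcases hsimple.2 _ _ hideal with ⟨hm, hp⟩ | h
  · exfalso
    rcases hsimple.1 with ⟨x, y, z, hne⟩ | ⟨x, y, z, hne⟩
    · exact hne ((Submodule.eq_bot_iff _).mp hm _ (hgm x y z))
    · exact hne ((Submodule.eq_bot_iff _).mp hp _ (hgp x y z))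
  · exact h

end Aux

/-- If `P` is a simple Kantor pair over `K`, then the centroid `C(P)` is a
field (a commutative subring of `End(P⁻) ⊕ End(P⁺)` with `1 ≠ 0` in which every nonzero
element is invertible), and `P`, viewed as a pair of `C(P)`-modules via the centroid
action with the same products, is a central simple Kantor pair over the field `C(P)`
(simplicity is expressed via ideals stable under the centroid action, i.e.
`C(P)`-submodule ideals; centrality over `C(P)` by the `C(P)`-centroid being `C(P)`). -/
theorem statement4 {K : Type*} [CommRing K] (h6 : IsUnit (6 : K))
    {Pm Pp : Type*} [AddCommGroup Pm] [AddCommGroup Pp] [Module K Pm] [Module K Pp]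
    (KP : KantorPair K Pm Pp) (hsimple : KP.IsSimplePair) :
    -- C(P) is a commutative unital subring of End(P⁻) ⊕ End(P⁺) ...
    KP.InCentroid LinearMap.id LinearMap.id ∧
    (∀ ωm ωp ωm' ωp', KP.InCentroid ωm ωp → KP.InCentroid ωm' ωp' →
      KP.InCentroid (ωm + ωm') (ωp + ωp') ∧
      KP.InCentroid (ωm ∘ₗ ωm') (ωp ∘ₗ ωp') ∧
      ωm ∘ₗ ωm' = ωm' ∘ₗ ωm ∧ ωp ∘ₗ ωp' = ωp' ∘ₗ ωp) ∧
    (∀ (a : K) ωm ωp, KP.InCentroid ωm ωp → KP.InCentroid (a • ωm) (a • ωp)) ∧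
    -- ... which is a field: 1 ≠ 0 and every nonzero element has an inverse in C(P)
    ¬((LinearMap.id : Pm →ₗ[K] Pm) = 0 ∧ (LinearMap.id : Pp →ₗ[K] Pp) = 0) ∧
    (∀ ωm ωp, KP.InCentroid ωm ωp → ¬(ωm = 0 ∧ ωp = 0) →
      ∃ ωm' ωp', KP.InCentroid ωm' ωp' ∧
        ωm ∘ₗ ωm' = LinearMap.id ∧ ωm' ∘ₗ ωm = LinearMap.id ∧
        ωp ∘ₗ ωp' = LinearMap.id ∧ ωp' ∘ₗ ωp = LinearMap.id) ∧
    -- P is simple over C(P): every ideal of P which is stable under the centroid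
    -- (i.e. every C(P)-submodule ideal) is trivial, and some product is nonzero
    ((∃ x y z, KP.tm x y z ≠ 0) ∨ (∃ x y z, KP.tp x y z ≠ 0)) ∧
    (∀ (Qm : Submodule K Pm) (Qp : Submodule K Pp), KP.IsIdealPair Qm Qp →
      (∀ ωm ωp, KP.InCentroid ωm ωp →
        (∀ q ∈ Qm, ωm q ∈ Qm) ∧ (∀ q ∈ Qp, ωp q ∈ Qp)) →
      (Qm = ⊥ ∧ Qp = ⊥) ∨ (Qm = ⊤ ∧ Qp = ⊤)) ∧
    -- P is central over C(P): every element of the centroid of P regarded over C(P)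
    -- (i.e. commuting with the C(P)-action) lies in C(P) (is a C(P)-scalar),
    -- and the map C(P) → C_{C(P)}(P) is injective
    (∀ ωm ωp, KP.InCentroid ωm ωp →
      (∀ cm cp, KP.InCentroid cm cp → ωm ∘ₗ cm = cm ∘ₗ ωm ∧ ωp ∘ₗ cp = cp ∘ₗ ωp) →
      ∃ cm cp, KP.InCentroid cm cp ∧ ωm = cm ∧ ωp = cp) := by
  obtain ⟨hspm, hspp⟩ := span_products_eq_top KP hsimple
  refine ⟨?_, ?_, ?_, ?_, ?_, hsimple.1, ?_, ?_⟩
  · -- id is in the centroid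
    exact ⟨fun x y z => ⟨rfl, rfl, rfl⟩, fun x y z => ⟨rfl, rfl, rfl⟩⟩
  · -- closure under + and ∘, commutativity
    intro ωm ωp ωm' ωp' h h'
    refine ⟨⟨fun x y z => ⟨?_, ?_, ?_⟩, fun x y z => ⟨?_, ?_, ?_⟩⟩,
      ⟨fun x y z => ⟨?_, ?_, ?_⟩, fun x y z => ⟨?_, ?_, ?_⟩⟩, ?_, ?_⟩
    · simp only [LinearMap.add_apply]; rw [(h.1 x y z).1, (h'.1 x y z).1, KP.tm_add₁]
    · simp only [LinearMap.add_apply]; rw [(h.1 x y z).2.1, (h'.1 x y z).2.1, KP.tm_add₂]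
    · simp only [LinearMap.add_apply]; rw [(h.1 x y z).2.2, (h'.1 x y z).2.2, KP.tm_add₃]
    · simp only [LinearMap.add_apply]; rw [(h.2 x y z).1, (h'.2 x y z).1, KP.tp_add₁]
    · simp only [LinearMap.add_apply]; rw [(h.2 x y z).2.1, (h'.2 x y z).2.1, KP.tp_add₂]
    · simp only [LinearMap.add_apply]; rw [(h.2 x y z).2.2, (h'.2 x y z).2.2, KP.tp_add₃]
    · simp only [LinearMap.comp_apply]; rw [(h'.1 x y z).1, (h.1 (ωm' x) y z).1]
    · simp only [LinearMap.comp_apply]; rw [(h'.1 x y z).2.1, (h.1 x (ωp' y) z).2.1]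
    · simp only [LinearMap.comp_apply]; rw [(h'.1 x y z).2.2, (h.1 x y (ωm' z)).2.2]
    · simp only [LinearMap.comp_apply]; rw [(h'.2 x y z).1, (h.2 (ωp' x) y z).1]
    · simp only [LinearMap.comp_apply]; rw [(h'.2 x y z).2.1, (h.2 x (ωm' y) z).2.1]
    · simp only [LinearMap.comp_apply]; rw [(h'.2 x y z).2.2, (h.2 x y (ωp' z)).2.2]
    · -- commutativity on Pm
      apply LinearMap.ext_on hspm
      rintro w ⟨x, y, z, rfl⟩
      simp only [LinearMap.comp_apply]; rw [
        (h'.1 x y z).1, (h.1 (ωm' x) y z).2.2,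
        (h.1 x y z).2.2, (h'.1 x y (ωm z)).1]
    · -- commutativity on Pp
      apply LinearMap.ext_on hspp
      rintro w ⟨x, y, z, rfl⟩
      simp only [LinearMap.comp_apply]; rw [
        (h'.2 x y z).1, (h.2 (ωp' x) y z).2.2,
        (h.2 x y z).2.2, (h'.2 x y (ωp z)).1]
  · -- closure under scalars
    intro a ωm ωp h
    refine ⟨fun x y z => ⟨?_, ?_, ?_⟩, fun x y z => ⟨?_, ?_, ?_⟩⟩
    · simp only [LinearMap.smul_apply]; rw [(h.1 x y z).1, ← KP.tm_smul₁]
    · simp only [LinearMap.smul_apply]; rw [(h.1 x y z).2.1, ← KP.tm_smul₂]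
    · simp only [LinearMap.smul_apply]; rw [(h.1 x y z).2.2, ← KP.tm_smul₃]
    · simp only [LinearMap.smul_apply]; rw [(h.2 x y z).1, ← KP.tp_smul₁]
    · simp only [LinearMap.smul_apply]; rw [(h.2 x y z).2.1, ← KP.tp_smul₂]
    · simp only [LinearMap.smul_apply]; rw [(h.2 x y z).2.2, ← KP.tp_smul₃]
  · -- 1 ≠ 0
    rintro ⟨hm, hp⟩
    rcases hsimple.1 with ⟨x, y, z, hne⟩ | ⟨x, y, z, hne⟩
    · exact hne (by simpa using congrArg (fun f => f (KP.tm x y z)) hm)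
    · exact hne (by simpa using congrArg (fun f => f (KP.tp x y z)) hp)
  · -- inverses
    intro ωm ωp h hne
    have hker : KP.IsIdealPair (LinearMap.ker ωm) (LinearMap.ker ωp) := by
      refine ⟨fun x z y q hq => ⟨?_, ?_⟩, fun x z r hr => ?_,
        fun x z y q hq => ⟨?_, ?_⟩, fun x z r hr => ?_⟩
      · rw [LinearMap.mem_ker, (h.1 x y q).2.2, LinearMap.mem_ker.mp hq]
        have := KP.tm_smul₃ (0 : K) x y 0; simpa using this
      · rw [LinearMap.mem_ker, (h.1 q y z).1, LinearMap.mem_ker.mp hq]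
        have := KP.tm_smul₁ (0 : K) 0 y z; simpa using this
      · rw [LinearMap.mem_ker, (h.1 x r z).2.1, LinearMap.mem_ker.mp hr]
        have := KP.tm_smul₂ (0 : K) x 0 z; simpa using this
      · rw [LinearMap.mem_ker, (h.2 x y q).2.2, LinearMap.mem_ker.mp hq]
        have := KP.tp_smul₃ (0 : K) x y 0; simpa using this
      · rw [LinearMap.mem_ker, (h.2 q y z).1, LinearMap.mem_ker.mp hq]
        have := KP.tp_smul₁ (0 : K) 0 y z; simpa using this
      · rw [LinearMap.mem_ker, (h.2 x r z).2.1, LinearMap.mem_ker.mp hr]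
        have := KP.tp_smul₂ (0 : K) x 0 z; simpa using this
    have hrg : KP.IsIdealPair (LinearMap.range ωm) (LinearMap.range ωp) := by
      refine ⟨fun x z y q hq => ⟨?_, ?_⟩, fun x z r hr => ?_,
        fun x z y q hq => ⟨?_, ?_⟩, fun x z r hr => ?_⟩
      · obtain ⟨q', rfl⟩ := hq; exact ⟨KP.tm x y q', (h.1 x y q').2.2⟩
      · obtain ⟨q', rfl⟩ := hq; exact ⟨KP.tm q' y z, (h.1 q' y z).1⟩
      · obtain ⟨r', rfl⟩ := hr; exact ⟨KP.tm x r' z, (h.1 x r' z).2.1⟩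
      · obtain ⟨q', rfl⟩ := hq; exact ⟨KP.tp x y q', (h.2 x y q').2.2⟩
      · obtain ⟨q', rfl⟩ := hq; exact ⟨KP.tp q' y z, (h.2 q' y z).1⟩
      · obtain ⟨r', rfl⟩ := hr; exact ⟨KP.tp x r' z, (h.2 x r' z).2.1⟩
    have hkb : LinearMap.ker ωm = ⊥ ∧ LinearMap.ker ωp = ⊥ := by
      rcases hsimple.2 _ _ hker with hk | ⟨hk1, hk2⟩
      · exact hk
      · exact absurd ⟨LinearMap.ker_eq_top.mp hk1, LinearMap.ker_eq_top.mp hk2⟩ hne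
    have hrt : LinearMap.range ωm = ⊤ ∧ LinearMap.range ωp = ⊤ := by
      rcases hsimple.2 _ _ hrg with ⟨hk1, hk2⟩ | hk
      · exact absurd ⟨LinearMap.range_eq_bot.mp hk1, LinearMap.range_eq_bot.mp hk2⟩ hne
      · exact hk
    have hbm : Function.Bijective ωm :=
      ⟨LinearMap.ker_eq_bot.mp hkb.1, LinearMap.range_eq_top.mp hrt.1⟩
    have hbp : Function.Bijective ωp :=
      ⟨LinearMap.ker_eq_bot.mp hkb.2, LinearMap.range_eq_top.mp hrt.2⟩
    let em := LinearEquiv.ofBijective ωm hbm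
    let ep := LinearEquiv.ofBijective ωp hbp
    have hem : ∀ v : Pm, ωm (em.symm.toLinearMap v) = v := fun v => em.apply_symm_apply v
    have hep : ∀ v : Pp, ωp (ep.symm.toLinearMap v) = v := fun v => ep.apply_symm_apply v
    have hem' : ∀ v : Pm, em.symm.toLinearMap (ωm v) = v := fun v => em.symm_apply_apply v
    have hep' : ∀ v : Pp, ep.symm.toLinearMap (ωp v) = v := fun v => ep.symm_apply_apply v
    refine ⟨em.symm.toLinearMap, ep.symm.toLinearMap, ⟨fun x y z => ?_, fun x y z => ?_⟩,
      ?_, ?_, ?_, ?_⟩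
    · refine ⟨hbm.1 ?_, hbm.1 ?_, hbm.1 ?_⟩
      · rw [hem, (h.1 _ y z).1, hem]
      · rw [hem, (h.1 x _ z).2.1, hep]
      · rw [hem, (h.1 x y _).2.2, hem]
    · refine ⟨hbp.1 ?_, hbp.1 ?_, hbp.1 ?_⟩
      · rw [hep, (h.2 _ y z).1, hep]
      · rw [hep, (h.2 x _ z).2.1, hem]
      · rw [hep, (h.2 x y _).2.2, hep]
    · exact LinearMap.ext fun v => hem v
    · exact LinearMap.ext fun v => hem' v
    · exact LinearMap.ext fun v => hep v
    · exact LinearMap.ext fun v => hep' v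
  · -- simplicity over C(P)
    intro Qm Qp hid _
    exact hsimple.2 Qm Qp hid
  · -- centrality over C(P)
    intro ωm ωp h _
    exact ⟨ωm, ωp, h, rfl, rfl⟩
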